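/- For the geometric offspring pgf f(s) = (1−p)/(1−ps), one has g_N(s) = 1 − [p(1−s)/(1−ps)]^N for all s ∈ [0,1) and 0 < p < 1. -/

import Mathlib

lemma geom_iteratedDeriv (p : ℝ) (j : ℕ) (s : ℝ) (h : 1 - p * s ≠ 0) :
    iteratedDeriv j (fun s => (1 - p) / (1 - p * s)) s
      = (1 - p) * p ^ j * (Nat.factorial j : ℝ) * ((1 - p * s) ^ (j + 1))⁻¹ := by
  induction j generalizing s with
  | zero =>
      simp [iteratedDeriv_zero, div_eq_mul_inv]
  | succ j ih =>
      rw [iteratedDeriv_succ]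
      have hopen : IsOpen {x : ℝ | 1 - p * x ≠ 0} := by
        exact isOpen_ne.preimage (by continuity)
      have hev : iteratedDeriv j (fun s => (1 - p) / (1 - p * s))
          =ᶠ[nhds s] fun x => (1 - p) * p ^ j * (Nat.factorial j : ℝ) * ((1 - p * x) ^ (j + 1))⁻¹ := by
        filter_upwards [hopen.mem_nhds h] with x hx
        exact ih x hx
      rw [hev.deriv_eq]
      have hu : HasDerivAt (fun x : ℝ => 1 - p * x) (-p) s := by
        simpa using ((hasDerivAt_id s).const_mul p).const_sub (1:ℝ)
      have hpow : HasDerivAt (fun x : ℝ => (1 - p * x) ^ (j + 1))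
          (((j + 1 : ℕ) : ℝ) * (1 - p * s) ^ j * (-p)) s := by
        simpa using hu.fun_pow (j + 1)
      have hpn : (1 - p * s) ^ (j + 1) ≠ 0 := pow_ne_zero _ h
      have hinv := hpow.fun_inv hpn
      have hfin := hinv.const_mul ((1 - p) * p ^ j * (Nat.factorial j : ℝ))
      rw [hfin.deriv]
      rw [Nat.factorial_succ]
      push_cast
      field_simp
      ring

/-- For the geometric pgf `f(s) = (1-p)/(1-ps)`, one has
`g_N(s) = 1 - (p(1-s)/(1-ps))^N` on `[0,1)`. -/
theorem gN_geometric (p : ℝ) (hp : 0 < p) (hp1 : p < 1) (N : ℕ) (hN : 1 ≤ N)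
    (f : ℝ → ℝ) (hf : f = fun s => (1 - p) / (1 - p * s))
    (s : ℝ) (hs : s ∈ Set.Ico (0:ℝ) 1) :
    ∑ j ∈ Finset.range N, (1 - s) ^ j * iteratedDeriv j f s / (Nat.factorial j : ℝ)
      = 1 - (p * (1 - s) / (1 - p * s)) ^ N := by
  obtain ⟨hs0, hs1⟩ := hs
  have hu : 0 < 1 - p * s := by nlinarith
  have hu' : 1 - p * s ≠ 0 := ne_of_gt hu
  set r : ℝ := p * (1 - s) / (1 - p * s) with hr
  have hterm : ∀ j ∈ Finset.range N,
      (1 - s) ^ j * iteratedDeriv j f s / (Nat.factorial j : ℝ)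
        = (1 - p) / (1 - p * s) * r ^ j := by
    intro j _
    rw [hf, geom_iteratedDeriv p j s hu', hr]
    have hfj : (Nat.factorial j : ℝ) ≠ 0 := Nat.cast_ne_zero.mpr j.factorial_ne_zero
    rw [div_pow, mul_pow]
    field_simp
    ring
  rw [Finset.sum_congr rfl hterm, ← Finset.mul_sum]
  have hr1 : r ≠ 1 := by
    have : 1 - r = (1 - p) / (1 - p * s) := by
      rw [hr]; field_simp; ring
    have hpos : 0 < (1 - p) / (1 - p * s) := div_pos (by linarith) hu
    intro hcontra
    rw [hcontra] at this
    simp at this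
    linarith
  have h1r : (1 - p) / (1 - p * s) = 1 - r := by rw [hr]; field_simp; ring
  rw [h1r]
  calc (1 - r) * ∑ j ∈ Finset.range N, r ^ j
      = -((∑ j ∈ Finset.range N, r ^ j) * (r - 1)) := by ring
    _ = -(r ^ N - 1) := by rw [geom_sum_mul]
    _ = 1 - r ^ N := by ring
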